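/- For any real u with 0 ≤ u ≤ e, the function Φ_u(t) = √(t log t) · (1 + (log log t − 1)/(2 log t) − u (log log t)²/(log t)²) is increasing and concave for t ≥ e^e. -/

import Mathlib

noncomputable def G13 (u x : ℝ) : ℝ := 1 + (Real.log x - 1)/(2*x) - u * Real.log x^2/x^2
noncomputable def Gd13 (u x : ℝ) : ℝ := (2 - Real.log x)/(2*x^2) + 2*u*(Real.log x^2 - Real.log x)/x^3
noncomputable def Gdd13 (u x : ℝ) : ℝ := (2*Real.log x - 5)/(2*x^3) + 2*u*(5*Real.log x - 1 - 3*Real.log x^2)/x^4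
noncomputable def Ph13 (u x : ℝ) : ℝ := (x+1) * G13 u x + 2*x*Gd13 u x
noncomputable def Phd13 (u x : ℝ) : ℝ := G13 u x + (x+3) * Gd13 u x + 2*x*Gdd13 u x
lemma hG13 (u x : ℝ) (hx : 1 < x) : HasDerivAt (G13 u) (Gd13 u x) x := by
  have hx0 : (0:ℝ) < x := by linarith
  have hlog : HasDerivAt Real.log x⁻¹ x := Real.hasDerivAt_log hx0.ne'
  have hden : HasDerivAt (fun y : ℝ => 2*y) 2 x := by
    simpa using (hasDerivAt_id x).const_mul 2
  have h1 := (hlog.sub_const 1).div hden (by positivity)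
  have h2 := ((hlog.pow 2).const_mul u).div (hasDerivAt_pow 2 x) (by positivity)
  have h := (h1.const_add 1).sub h2
  refine h.congr_deriv ?_
  unfold Gd13
  simp only [Pi.pow_apply, Pi.sub_apply, Pi.neg_apply]
  field_simp
  ring

lemma hGd13 (u x : ℝ) (hx : 1 < x) : HasDerivAt (Gd13 u) (Gdd13 u x) x := by
  have hx0 : (0:ℝ) < x := by linarith
  have hlog : HasDerivAt Real.log x⁻¹ x := Real.hasDerivAt_log hx0.ne'
  have hden : HasDerivAt (fun y : ℝ => 2*y^2) (2*(2*x)) x := by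
    simpa using (hasDerivAt_pow 2 x).const_mul 2
  have h1 := ((hlog.neg.const_add 2)).div hden (by positivity)
  have h2 := (((hlog.pow 2).sub hlog).const_mul (2*u)).div (hasDerivAt_pow 3 x) (by positivity)
  have h := h1.add h2
  refine h.congr_deriv ?_
  unfold Gdd13
  simp only [Pi.pow_apply, Pi.sub_apply, Pi.neg_apply]
  field_simp
  ring

lemma hPh13 (u x : ℝ) (hx : 1 < x) : HasDerivAt (Ph13 u) (Phd13 u x) x := by
  have h1 := ((hasDerivAt_id x).add_const 1).mul (hG13 u x hx)
  have h2 := (((hasDerivAt_id x).const_mul 2)).mul (hGd13 u x hx)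
  have h := h1.add h2
  refine h.congr_deriv ?_
  unfold Phd13
  simp only [id_eq]
  ring
lemma basic13 (u x : ℝ) (hu0 : 0 ≤ u) (hue : u ≤ Real.exp 1) (hx : Real.exp 1 ≤ x) :
    2.7182 ≤ x ∧ 1 ≤ Real.log x ∧ 2.7182 * Real.log x ≤ x ∧ u ≤ 2.7183 := by
  have he1 : (2.7182:ℝ) < Real.exp 1 := by
    have := Real.exp_one_gt_d9; linarith
  have he2 : Real.exp 1 < 2.7183 := by
    have := Real.exp_one_lt_d9; linarith
  have hx0 : (0:ℝ) < x := by linarith [Real.exp_pos 1]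
  have hM1 : 1 ≤ Real.log x := by
    rw [show (1:ℝ) = Real.log (Real.exp 1) by rw [Real.log_exp]]
    exact Real.log_le_log (Real.exp_pos 1) hx
  have hdiv : Real.log x ≤ x / Real.exp 1 := by
    have h := Real.log_le_sub_one_of_pos (show 0 < x / Real.exp 1 by positivity)
    rw [Real.log_div hx0.ne' (Real.exp_pos 1).ne', Real.log_exp] at h
    linarith
  have hMx : Real.exp 1 * Real.log x ≤ x := by
    rw [← le_div_iff₀' (Real.exp_pos 1)]; exact hdiv
  refine ⟨by linarith, hM1, ?_, by linarith⟩
  nlinarith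
lemma sign1 (u x : ℝ) (hu0 : 0 ≤ u) (hue : u ≤ Real.exp 1) (hx : Real.exp 1 ≤ x) :
    0 < Ph13 u x := by
  obtain ⟨hx', hM1, hMx, hue'⟩ := basic13 u x hu0 hue hx
  have hx0 : (0:ℝ) < x := by linarith
  set M := Real.log x with hM
  have key : Ph13 u x * (2*x^3) =
      2*x^3*(x+1) + x^2*(x+1)*(M-1) + 2*x^2*(2-M) + u*(-2*x*(x+1)*M^2 + 8*x*M*(M-1)) := by
    unfold Ph13 G13 Gd13
    field_simp
    ring
  have hpoly : 0 < 2*x^3*(x+1) + x^2*(x+1)*(M-1) + 2*x^2*(2-M) + u*(-2*x*(x+1)*M^2 + 8*x*M*(M-1)) := by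
    nlinarith [mul_nonneg (mul_nonneg (by linarith : (0:ℝ) ≤ 2.7183 - u) (mul_nonneg hx0.le (by linarith : (0:ℝ) ≤ x+1))) (sq_nonneg M),
      mul_nonneg (by linarith : (0:ℝ) ≤ x - 2.7182*M) (mul_nonneg (mul_nonneg hx0.le (by linarith : (0:ℝ) ≤ x+1)) (by linarith : (0:ℝ) ≤ M)),
      mul_nonneg (by linarith : (0:ℝ) ≤ x - 2.7182*M) (mul_nonneg hx0.le hx0.le),
      mul_nonneg (by linarith : (0:ℝ) ≤ x - 2.7182*M) (mul_nonneg (mul_nonneg hx0.le hx0.le) hx0.le),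
      mul_nonneg (mul_nonneg hu0 (by linarith : (0:ℝ) ≤ M - 1)) (mul_nonneg hx0.le (by linarith : (0:ℝ) ≤ M)),
      mul_nonneg (by linarith : (0:ℝ) ≤ x - 2.7182) (mul_nonneg (mul_nonneg hx0.le hx0.le) hx0.le)]
  have h3 : (0:ℝ) < 2*x^3 := by positivity
  have := div_pos (key ▸ hpoly) h3
  rwa [mul_div_cancel_right₀ _ h3.ne'] at this

lemma sign2 (u x : ℝ) (hu0 : 0 ≤ u) (hue : u ≤ Real.exp 1) (hx : Real.exp 1 ≤ x) :
    2*x*Phd13 u x - (x+1)*Ph13 u x ≤ 0 := by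
  obtain ⟨hx', hM1, hMx, hue'⟩ := basic13 u x hu0 hue hx
  have hx0 : (0:ℝ) < x := by linarith
  set M := Real.log x with hM
  have key : ((x+1)*Ph13 u x - 2*x*Phd13 u x) * (2*x^2) =
      2*x^4 + (4-2*M)*x^2 + x*(x+1)^2*(M-1) + (12-4*M)*x
      + 2*u*(-(x+1)^2*M^2 + 4*(x+1)*M*(M-1) + 2*x*(2*M-M^2) + 4*M-4*M^2 + 16*M^2-32*M+8) := by
    unfold Ph13 Phd13 G13 Gd13 Gdd13
    field_simp
    ring
  have hpoly : (0:ℝ) ≤ 2*x^4 + (4-2*M)*x^2 + x*(x+1)^2*(M-1) + (12-4*M)*x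
      + 2*u*(-(x+1)^2*M^2 + 4*(x+1)*M*(M-1) + 2*x*(2*M-M^2) + 4*M-4*M^2 + 16*M^2-32*M+8) := by
    nlinarith [mul_nonneg (mul_nonneg (by linarith : (0:ℝ) ≤ 2.7183 - u) (sq_nonneg (x+1))) (sq_nonneg M),
      mul_nonneg (by linarith : (0:ℝ) ≤ x - 2.7182*M) (mul_nonneg (sq_nonneg (x+1)) (by linarith : (0:ℝ) ≤ M)),
      mul_nonneg (by linarith : (0:ℝ) ≤ x - 2.7182*M) (mul_nonneg (mul_nonneg hx0.le hx0.le) hx0.le),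
      mul_nonneg (by linarith : (0:ℝ) ≤ x - 2.7182*M) (mul_nonneg hx0.le hx0.le),
      mul_nonneg (mul_nonneg hu0 (by linarith : (0:ℝ) ≤ M - 1)) (mul_nonneg (by linarith : (0:ℝ) ≤ x+1) (by linarith : (0:ℝ) ≤ M)),
      mul_nonneg (mul_nonneg hu0 (by linarith : (0:ℝ) ≤ M - 1)) hx0.le,
      mul_nonneg (by linarith : (0:ℝ) ≤ x - 2.7182) (mul_nonneg (mul_nonneg hx0.le hx0.le) hx0.le),
      mul_nonneg hu0 (mul_nonneg hx0.le (by linarith : (0:ℝ) ≤ M))]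
  have h2 : (0:ℝ) < 2*x^2 := by positivity
  nlinarith [key ▸ hpoly]

lemma hsq13 (t : ℝ) (ht0 : 0 < t) (hL0 : 0 < Real.log t) :
    HasDerivAt (fun y : ℝ => Real.sqrt (y * Real.log y))
      ((Real.log t + 1)/(2*Real.sqrt (t * Real.log t))) t := by
  have htL : 0 < t * Real.log t := mul_pos ht0 hL0
  have hA : HasDerivAt (fun y : ℝ => y * Real.log y) (Real.log t + 1) t := by
    have := (hasDerivAt_id t).mul (Real.hasDerivAt_log ht0.ne')
    refine this.congr_deriv ?_
    simp only [id_eq]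
    field_simp
  have := (Real.hasDerivAt_sqrt htL.ne').comp t hA
  refine this.congr_deriv ?_
  ring

lemma hasD1 (u t : ℝ) (ht0 : 0 < t) (hL1 : 1 < Real.log t) :
    HasDerivAt (fun y : ℝ => Real.sqrt (y * Real.log y) *
        (1 + (Real.log (Real.log y) - 1) / (2 * Real.log y)
          - u * Real.log (Real.log y) ^ 2 / Real.log y ^ 2))
      (Ph13 u (Real.log t) / (2 * Real.sqrt (t * Real.log t))) t := by
  have hL0 : 0 < Real.log t := by linarith
  have htL : 0 < t * Real.log t := mul_pos ht0 hL0
  set L := Real.log t with hLdef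
  set s := Real.sqrt (t * L) with hsdef
  have hs0 : 0 < s := Real.sqrt_pos.2 htL
  have hs2 : s^2 = t * L := Real.sq_sqrt htL.le
  have hts : t = s^2 / L := by rw [hs2]; field_simp
  have hGc : HasDerivAt (fun y : ℝ => G13 u (Real.log y)) (Gd13 u L * t⁻¹) t := by
    have := (hG13 u L hL1).comp t (Real.hasDerivAt_log ht0.ne')
    exact this
  have hF := (hsq13 t ht0 hL0).mul hGc
  have heq : (L + 1)/(2*s) * G13 u L + s * (Gd13 u L * t⁻¹) = Ph13 u L / (2*s) := by
    rw [hts]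
    unfold Ph13
    have hL0' : L ≠ 0 := hL0.ne'
    field_simp
  rw [← heq]
  exact hF

lemma hasD2 (u t : ℝ) (ht0 : 0 < t) (hL1 : 1 < Real.log t) :
    HasDerivAt (fun y : ℝ => Ph13 u (Real.log y) / (2 * Real.sqrt (y * Real.log y)))
      ((2*Real.log t*Phd13 u (Real.log t) - (Real.log t+1)*Ph13 u (Real.log t))
        /(4*(t*Real.log t)*Real.sqrt (t*Real.log t))) t := by
  have hL0 : 0 < Real.log t := by linarith
  have htL : 0 < t * Real.log t := mul_pos ht0 hL0
  set L := Real.log t with hLdef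
  set s := Real.sqrt (t * L) with hsdef
  have hs0 : 0 < s := Real.sqrt_pos.2 htL
  have hs2 : s^2 = t * L := Real.sq_sqrt htL.le
  have hts : t = s^2 / L := by rw [hs2]; field_simp
  have hnum : HasDerivAt (fun y : ℝ => Ph13 u (Real.log y)) (Phd13 u L * t⁻¹) t := by
    have := (hPh13 u L hL1).comp t (Real.hasDerivAt_log ht0.ne')
    exact this
  have hden : HasDerivAt (fun y : ℝ => 2 * Real.sqrt (y * Real.log y)) (2*((L+1)/(2*s))) t :=
    (hsq13 t ht0 hL0).const_mul 2
  have hq := hnum.div hden (by positivity)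
  have heq : (Phd13 u L * t⁻¹ * (2*s) - Ph13 u L * (2*((L+1)/(2*s))))/(2*s)^2
      = (2*L*Phd13 u L - (L+1)*Ph13 u L)/(4*(t*L)*s) := by
    rw [hts]
    have hL0' : L ≠ 0 := hL0.ne'
    field_simp
    ring
  rw [← heq]
  exact hq

lemma facts13 (t : ℝ) (ht : Real.exp (Real.exp 1) ≤ t) :
    0 < t ∧ 1 < Real.log t ∧ Real.exp 1 ≤ Real.log t := by
  have ht0 : 0 < t := (Real.exp_pos _).trans_le ht
  have hLe : Real.exp 1 ≤ Real.log t := by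
    rw [show Real.exp 1 = Real.log (Real.exp (Real.exp 1)) from (Real.log_exp _).symm]
    exact Real.log_le_log (Real.exp_pos _) ht
  have := Real.exp_one_gt_d9
  exact ⟨ht0, by linarith, hLe⟩

theorem stmt13 (u : ℝ) (hu0 : 0 ≤ u) (hue : u ≤ Real.exp 1) :
    StrictMonoOn
      (fun t : ℝ => Real.sqrt (t * Real.log t) *
        (1 + (Real.log (Real.log t) - 1) / (2 * Real.log t)
          - u * Real.log (Real.log t) ^ 2 / Real.log t ^ 2))
      (Set.Ici (Real.exp (Real.exp 1))) ∧
    ConcaveOn ℝ (Set.Ici (Real.exp (Real.exp 1)))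
      (fun t : ℝ => Real.sqrt (t * Real.log t) *
        (1 + (Real.log (Real.log t) - 1) / (2 * Real.log t)
          - u * Real.log (Real.log t) ^ 2 / Real.log t ^ 2)) := by
  have hcont : ContinuousOn
      (fun t : ℝ => Real.sqrt (t * Real.log t) *
        (1 + (Real.log (Real.log t) - 1) / (2 * Real.log t)
          - u * Real.log (Real.log t) ^ 2 / Real.log t ^ 2))
      (Set.Ici (Real.exp (Real.exp 1))) := by
    intro t ht
    obtain ⟨ht0, hL1, hLe⟩ := facts13 t ht
    exact (hasD1 u t ht0 hL1).continuousAt.continuousWithinAt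
  have hint : interior (Set.Ici (Real.exp (Real.exp 1))) = Set.Ioi (Real.exp (Real.exp 1)) :=
    interior_Ici
  constructor
  · apply strictMonoOn_of_deriv_pos (convex_Ici _) hcont
    intro t ht
    rw [hint] at ht
    obtain ⟨ht0, hL1, hLe⟩ := facts13 t (le_of_lt ht)
    rw [(hasD1 u t ht0 hL1).deriv]
    have hs0 : 0 < Real.sqrt (t * Real.log t) :=
      Real.sqrt_pos.2 (mul_pos ht0 (by linarith))
    exact div_pos (sign1 u (Real.log t) hu0 hue hLe) (by positivity)
  · apply concaveOn_of_hasDerivWithinAt2_nonpos (convex_Ici _) hcont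
      (f' := fun t => Ph13 u (Real.log t) / (2 * Real.sqrt (t * Real.log t)))
      (f'' := fun t => (2*Real.log t*Phd13 u (Real.log t) - (Real.log t+1)*Ph13 u (Real.log t))
        /(4*(t*Real.log t)*Real.sqrt (t*Real.log t)))
    · intro t ht
      rw [hint] at ht
      obtain ⟨ht0, hL1, hLe⟩ := facts13 t (le_of_lt ht)
      exact (hasD1 u t ht0 hL1).hasDerivWithinAt
    · intro t ht
      rw [hint] at ht
      obtain ⟨ht0, hL1, hLe⟩ := facts13 t (le_of_lt ht)
      exact (hasD2 u t ht0 hL1).hasDerivWithinAt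
    · intro t ht
      rw [hint] at ht
      obtain ⟨ht0, hL1, hLe⟩ := facts13 t (le_of_lt ht)
      have hnum : 2*Real.log t*Phd13 u (Real.log t) - (Real.log t+1)*Ph13 u (Real.log t) ≤ 0 := by
        have := sign2 u (Real.log t) hu0 hue hLe
        linarith
      have hden : 0 ≤ 4*(t*Real.log t)*Real.sqrt (t*Real.log t) := by positivity
      exact div_nonpos_iff.mpr (Or.inr ⟨hnum, hden⟩)
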